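/- In K_{3,1,1,1,1,1} with parts {a,b,c}, {1},…,{5}, any fixed 8-cycle (Hamiltonian cycle) can be contained in at most two of the five canonical H₈-subgraphs (one for each choice of top vertex among 1,…,5, with middle vertices a, b, c): if it were contained in three, there would be three distinct vertices among 1,…,5 each adjacent along the cycle to two of a, b, c, forcing a closed subwalk of length 6, contradicting that the cycle has length 8. -/

import Mathlib

open SimpleGraph

/-- The graph `H₈`, obtained from `K₇` by a triangle-Y move: vertex `0` is the
top vertex, `1,2,3` the middle vertices, `4,5,6,7` the bottom vertices. -/
def H8 : SimpleGraph (Fin 8) where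
  Adj u v := u ≠ v ∧
    ((![0, 1, 1, 1, 2, 2, 2, 2] u = (0 : Fin 3) ∧ ![0, 1, 1, 1, 2, 2, 2, 2] v = (1 : Fin 3)) ∨
     (![0, 1, 1, 1, 2, 2, 2, 2] u = (1 : Fin 3) ∧ ![0, 1, 1, 1, 2, 2, 2, 2] v = (0 : Fin 3)) ∨
     (![0, 1, 1, 1, 2, 2, 2, 2] u = (1 : Fin 3) ∧ ![0, 1, 1, 1, 2, 2, 2, 2] v = (2 : Fin 3)) ∨
     (![0, 1, 1, 1, 2, 2, 2, 2] u = (2 : Fin 3) ∧ ![0, 1, 1, 1, 2, 2, 2, 2] v = (1 : Fin 3)) ∨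
     (![0, 1, 1, 1, 2, 2, 2, 2] u = (2 : Fin 3) ∧ ![0, 1, 1, 1, 2, 2, 2, 2] v = (2 : Fin 3)))
  symm := ⟨by intro u v h; exact ⟨h.1.symm, by tauto⟩⟩
  loopless := ⟨by intro v h; exact h.1 rfl⟩

/-- The vertex type of `K_{3,1,1,1,1,1}` with parts `{a,b,c}, {1},…,{5}`. -/
abbrev V311111 := Σ i, ![Fin 3, Fin 1, Fin 1, Fin 1, Fin 1, Fin 1] i

/-- The vertex of the `i`-th singleton part of `K_{3,1,1,1,1,1}`. -/
def sing5 : Fin 5 → V311111 :=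
  ![⟨1, (0 : Fin 1)⟩, ⟨2, (0 : Fin 1)⟩, ⟨3, (0 : Fin 1)⟩, ⟨4, (0 : Fin 1)⟩,
    ⟨5, (0 : Fin 1)⟩]

/- ### Auxiliary instances and lemmas -/

instance instDE311111 : ∀ i : Fin 6, DecidableEq (![Fin 3, Fin 1, Fin 1, Fin 1, Fin 1, Fin 1] i)
  | 0 => instDecidableEqFin _ | 1 => instDecidableEqFin _ | 2 => instDecidableEqFin _
  | 3 => instDecidableEqFin _ | 4 => instDecidableEqFin _ | 5 => instDecidableEqFin _

instance instFT311111 : ∀ i : Fin 6, Fintype (![Fin 3, Fin 1, Fin 1, Fin 1, Fin 1, Fin 1] i)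
  | 0 => Fin.fintype _ | 1 => Fin.fintype _ | 2 => Fin.fintype _
  | 3 => Fin.fintype _ | 4 => Fin.fintype _ | 5 => Fin.fintype _

instance : DecidableRel H8.Adj := fun u v => by
  unfold H8; exact inferInstanceAs (Decidable (_ ∧ _))

section CycleCount

variable {V : Type*} [DecidableEq V] {G : SimpleGraph V}

lemma countP_head {u w : V} (p : G.Walk u w) (hp : p.IsPath) (hn : ¬ p.Nil) :
    p.edges.countP (fun e => u ∈ e) = 1 := by
  cases p with
  | nil => simp at hn
  | cons h q =>
    rename_i b
    have hu : u ∉ q.support := by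
      have := hp.support_nodup
      simp only [Walk.support_cons, List.nodup_cons] at this
      exact this.1
    have hq0 : q.edges.countP (fun e => u ∈ e) = 0 := by
      rw [List.countP_eq_zero]
      intro e he
      simp only [decide_eq_true_eq]
      intro hue
      induction e with
      | h x y =>
        rcases Sym2.mem_iff.mp hue with rfl | rfl
        · exact hu (q.fst_mem_support_of_mem_edges he)
        · exact hu (q.snd_mem_support_of_mem_edges he)
    simp [List.countP_cons, hq0]

lemma countP_cycle {v : V} (c : G.Walk v v) (hc : c.IsCycle) {x : V} (hx : x ∈ c.support) :
    c.edges.countP (fun e => x ∈ e) = 2 := by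
  have hr := hc.rotate hx
  have hperm : ((c.rotate x hx).edges).Perm c.edges := (c.rotate_edges x hx).perm
  rw [← hperm.countP_eq]
  generalize hd : c.rotate x hx = d at hr ⊢
  cases d with
  | nil => exact absurd rfl hr.ne_nil
  | cons h q =>
    rename_i b
    rw [Walk.cons_isCycle_iff] at hr
    have hq1 : q.edges.countP (fun e => x ∈ e) = 1 := by
      have := countP_head q.reverse hr.1.reverse (Walk.not_nil_of_ne h.ne)
      rwa [Walk.edges_reverse, List.countP_reverse] at this
    simp [List.countP_cons, hq1]

end CycleCount

/- ### Finite facts by decide -/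

lemma sing5_fst_ne (i : Fin 5) : (sing5 i).1 ≠ 0 := by revert i; decide

lemma sing5_inj : Function.Injective sing5 := by decide

lemma fst_zero_cases : ∀ x : V311111, x.1 = 0 →
    x = ⟨0, (0 : Fin 3)⟩ ∨ x = ⟨0, (1 : Fin 3)⟩ ∨ x = ⟨0, (2 : Fin 3)⟩ := by decide

lemma fst_ne_zero_cases : ∀ u : V311111, u.1 ≠ 0 → ∃ j, u = sing5 j := by decide

lemma card_V311111 : Fintype.card V311111 = 8 := by decide

lemma fin5_exists (i1 i2 i3 : Fin 5) : ∃ j, j ≠ i1 ∧ j ≠ i2 ∧ j ≠ i3 := by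
  revert i1 i2 i3; decide

lemma fin5_unique (i1 i2 i3 i4 j j' : Fin 5) : i1 ≠ i2 → i1 ≠ i3 → i1 ≠ i4 → i2 ≠ i3 →
    i2 ≠ i4 → i3 ≠ i4 → (j ≠ i1 ∧ j ≠ i2 ∧ j ≠ i3 ∧ j ≠ i4) →
    (j' ≠ i1 ∧ j' ≠ i2 ∧ j' ≠ i3 ∧ j' ≠ i4) → j = j' := by
  revert i1 i2 i3 i4 j j'; decide

lemma H8_adj_zero : ∀ y : Fin 8, H8.Adj 0 y → y = 1 ∨ y = 2 ∨ y = 3 := by decide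

/- ### The main theorem -/

/-- In `K_{3,1,1,1,1,1}`, any fixed Hamiltonian (8-)cycle is contained in at
most two of the five canonical `H₈`-subgraphs, where the canonical
`H₈`-subgraph with top vertex the `i`-th singleton has middle vertices `a,b,c`
(the part of size 3) and the remaining four singletons as bottom vertices. -/
theorem stmt_17 :
    let G := completeMultipartiteGraph ![Fin 3, Fin 1, Fin 1, Fin 1, Fin 1, Fin 1]
    ∀ (v : V311111) (c : G.Walk v v), c.IsCycle → c.length = 8 →
      Nat.card {i : Fin 5 //
        ∃ f : H8 →g G, Function.Injective f ∧
          f 0 = sing5 i ∧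
          ({f 1, f 2, f 3} : Set V311111) = {w : V311111 | w.1 = 0} ∧
          ∀ e ∈ c.edges, ∃ e' ∈ H8.edgeSet, e = Sym2.map f e'} ≤ 2 := by
  intro G v c hc hlen
  classical
  set P : Fin 5 → Prop := fun i =>
    ∃ f : H8 →g G, Function.Injective f ∧
      f 0 = sing5 i ∧
      ({f 1, f 2, f 3} : Set V311111) = {w : V311111 | w.1 = 0} ∧
      ∀ e ∈ c.edges, ∃ e' ∈ H8.edgeSet, e = Sym2.map f e' with hP
  show Nat.card {i // P i} ≤ 2
  by_contra hcard
  push_neg at hcard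
  -- extract three distinct indices satisfying P
  have hcard' : 3 ≤ (Finset.univ.filter P).card := by
    have := Nat.card_eq_fintype_card (α := {i // P i})
    rw [this, Fintype.card_subtype] at hcard
    exact hcard
  obtain ⟨t, hts, htc⟩ := Finset.exists_subset_card_eq hcard'
  obtain ⟨i1, i2, i3, h12, h13, h23, rfl⟩ := Finset.card_eq_three.mp htc
  have hPmem : ∀ i ∈ ({i1, i2, i3} : Finset (Fin 5)), P i := by
    intro i hi
    have := hts hi
    simpa using (Finset.mem_filter.mp this).2
  have hP1 : P i1 := hPmem i1 (by simp)
  have hP2 : P i2 := hPmem i2 (by simp)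
  have hP3 : P i3 := hPmem i3 (by simp)
  -- every vertex is on the cycle
  have hsupp : ∀ x : V311111, x ∈ c.support := by
    intro x
    have hnd : c.support.tail.Nodup := hc.support_nodup
    have hlen' : c.support.tail.length = 8 := by
      have := Walk.length_support c
      simp only [List.length_tail, this, hlen]
    have huniv : c.support.tail.toFinset = Finset.univ := by
      apply Finset.eq_univ_of_card
      rw [List.toFinset_card_of_nodup hnd, hlen', card_V311111]
    refine List.mem_of_mem_tail ?_
    rw [← List.mem_toFinset, huniv]
    exact Finset.mem_univ x
  -- the incidence count
  set E : Finset (Sym2 V311111) := c.edges.toFinset with hEdef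
  have hmemE : ∀ e, e ∈ E ↔ e ∈ c.edges := fun e => List.mem_toFinset
  have hD : ∀ x : V311111, (E.filter (fun e => x ∈ e)).card = 2 := by
    intro x
    have h2 := countP_cycle c hc (hsupp x)
    have heq : Finset.filter (fun e => x ∈ e) E
        = (c.edges.filter (fun e => decide (x ∈ e))).toFinset := by
      ext e
      simp [hmemE, List.mem_filter, hEdef]
    rw [heq, List.toFinset_card_of_nodup (hc.edges_nodup.filter _),
      ← List.countP_eq_length_filter]
    exact h2
  -- key fact: edges at sing5 i go to part 0
  have hN : ∀ i : Fin 5, P i → ∀ e ∈ c.edges, sing5 i ∈ e →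
      ∃ w : V311111, w.1 = 0 ∧ e = s(sing5 i, w) := by
    intro i hPi e he hie
    obtain ⟨f, hinj, hf0, hmid, hedge⟩ := hPi
    obtain ⟨e', he', rfl⟩ := hedge e he
    induction e' with
    | h x y =>
      rw [Sym2.map_pair_eq] at hie ⊢
      rw [SimpleGraph.mem_edgeSet] at he'
      have key : ∀ x y : Fin 8, H8.Adj x y → sing5 i = f x →
          ∃ w : V311111, w.1 = 0 ∧ s(f x, f y) = s(sing5 i, w) := by
        intro x y hadj hfx
        have hx0 : x = 0 := (hinj (hf0.trans hfx)).symm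
        subst hx0
        have hy : y = 1 ∨ y = 2 ∨ y = 3 := H8_adj_zero y hadj
        have hfy : f y ∈ ({f 1, f 2, f 3} : Set V311111) := by
          rcases hy with rfl | rfl | rfl <;> simp
        rw [hmid] at hfy
        exact ⟨f y, hfy, by rw [hf0]⟩
      rcases Sym2.mem_iff.mp hie with hfx | hfy
      · exact key x y he' hfx
      · obtain ⟨w, hw, hww⟩ := key y x he'.symm hfy
        exact ⟨w, hw, by rw [Sym2.eq_swap]; exact hww⟩
  -- the three top vertices
  set t1 := sing5 i1
  set t2 := sing5 i2
  set t3 := sing5 i3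
  have hNt : ∀ (i : Fin 5), P i → ∀ e ∈ E, sing5 i ∈ e →
      ∃ w : V311111, w.1 = 0 ∧ e = s(sing5 i, w) := by
    intro i hPi e he
    exact hN i hPi e ((hmemE e).mp he)
  -- disjointness of incidence sets
  have hdisj : ∀ (i j : Fin 5), P i → i ≠ j →
      Disjoint (E.filter (fun e => sing5 i ∈ e)) (E.filter (fun e => sing5 j ∈ e)) := by
    intro i j hPi hij
    rw [Finset.disjoint_left]
    intro e he1 he2
    rw [Finset.mem_filter] at he1 he2
    obtain ⟨w, hw0, rfl⟩ := hNt i hPi e he1.1 he1.2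
    rcases Sym2.mem_iff.mp he2.2 with hji | hji
    · exact hij (sing5_inj hji.symm)
    · exact sing5_fst_ne j (hji ▸ hw0)
  -- the union F of incidence sets of the three tops has card 6
  set F : Finset (Sym2 V311111) :=
    E.filter (fun e => t1 ∈ e) ∪ E.filter (fun e => t2 ∈ e) ∪ E.filter (fun e => t3 ∈ e)
    with hFdef
  have hF6 : F.card = 6 := by
    rw [hFdef, Finset.card_union_of_disjoint, Finset.card_union_of_disjoint (hdisj i1 i2 hP1 h12),
      hD, hD, hD]
    · rw [Finset.disjoint_union_left]
      exact ⟨hdisj i1 i3 hP1 h13, hdisj i2 i3 hP2 h23⟩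
  -- B: edges meeting part 0
  set B : Finset (Sym2 V311111) := E.filter (fun e => ∃ x ∈ e, x.1 = (0 : Fin 6)) with hBdef
  have hFB : F ⊆ B := by
    intro e he
    rw [hFdef] at he
    rw [hBdef, Finset.mem_filter]
    simp only [Finset.mem_union, Finset.mem_filter] at he
    rcases he with (⟨hE', ht⟩ | ⟨hE', ht⟩) | ⟨hE', ht⟩
    · obtain ⟨w, hw0, rfl⟩ := hNt i1 hP1 _ hE' ht
      exact ⟨hE', w, by simp, hw0⟩
    · obtain ⟨w, hw0, rfl⟩ := hNt i2 hP2 _ hE' ht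
      exact ⟨hE', w, by simp, hw0⟩
    · obtain ⟨w, hw0, rfl⟩ := hNt i3 hP3 _ hE' ht
      exact ⟨hE', w, by simp, hw0⟩
  have hB6 : B.card ≤ 6 := by
    have hsub : B ⊆ E.filter (fun e => (⟨0, (0:Fin 3)⟩ : V311111) ∈ e)
        ∪ E.filter (fun e => (⟨0, (1:Fin 3)⟩ : V311111) ∈ e)
        ∪ E.filter (fun e => (⟨0, (2:Fin 3)⟩ : V311111) ∈ e) := by
      intro e he
      rw [hBdef, Finset.mem_filter] at he
      obtain ⟨hE', x, hxe, hx0⟩ := he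
      simp only [Finset.mem_union, Finset.mem_filter]
      rcases fst_zero_cases x hx0 with rfl | rfl | rfl
      · exact Or.inl (Or.inl ⟨hE', hxe⟩)
      · exact Or.inl (Or.inr ⟨hE', hxe⟩)
      · exact Or.inr ⟨hE', hxe⟩
    calc B.card ≤ _ := Finset.card_le_card hsub
      _ ≤ _ := (Finset.card_union_le _ _).trans
          (Nat.add_le_add_right (Finset.card_union_le _ _) _)
      _ ≤ 6 := by rw [hD, hD, hD]
  have hBF : F = B := Finset.eq_of_subset_of_card_le hFB (by omega)
  -- edges at any top of F go to part 0, so an edge in B containing sing5 j with j ∉ {i1,i2,i3}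
  -- is impossible
  have hnotB : ∀ (j : Fin 5), j ≠ i1 → j ≠ i2 → j ≠ i3 → ∀ e ∈ E, sing5 j ∈ e → e ∉ B := by
    intro j hj1 hj2 hj3 e heE hje heB
    rw [← hBF, hFdef] at heB
    simp only [Finset.mem_union, Finset.mem_filter] at heB
    have : ∃ i, (i = i1 ∨ i = i2 ∨ i = i3) ∧ P i ∧ sing5 i ∈ e := by
      rcases heB with (⟨_, h⟩ | ⟨_, h⟩) | ⟨_, h⟩
      · exact ⟨i1, Or.inl rfl, hP1, h⟩
      · exact ⟨i2, Or.inr (Or.inl rfl), hP2, h⟩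
      · exact ⟨i3, Or.inr (Or.inr rfl), hP3, h⟩
    obtain ⟨i, hi, hPi, hie⟩ := this
    obtain ⟨w, hw0, rfl⟩ := hNt i hPi e heE hie
    have hji : j ≠ i := by rcases hi with rfl | rfl | rfl <;> assumption
    rcases Sym2.mem_iff.mp hje with h | h
    · exact hji (sing5_inj h)
    · exact sing5_fst_ne j (h ▸ hw0)
  -- pick a fourth index
  obtain ⟨i4, h41, h42, h43⟩ := fin5_exists i1 i2 i3
  set t4 := sing5 i4
  -- both edges at t4 go to the same fifth singleton
  have hkey : ∀ e ∈ E.filter (fun e => t4 ∈ e), ∃ j : Fin 5,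
      j ≠ i1 ∧ j ≠ i2 ∧ j ≠ i3 ∧ j ≠ i4 ∧ e = s(t4, sing5 j) := by
    intro e he
    rw [Finset.mem_filter] at he
    obtain ⟨heE, ht4⟩ := he
    have headj : e ∈ G.edgeSet := c.edges_subset_edgeSet ((hmemE e).mp heE)
    -- write e = s(t4, u)
    obtain ⟨u, hu, rfl⟩ : ∃ u : V311111, u.1 ≠ t4.1 ∧ e = s(t4, u) := by
      clear hnotB hFB hBF
      induction e with
      | h x y =>
        rw [SimpleGraph.mem_edgeSet] at headj
        have hxy : x.1 ≠ y.1 := headj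
        rcases Sym2.mem_iff.mp ht4 with rfl | rfl
        · exact ⟨y, fun h => hxy h.symm, rfl⟩
        · exact ⟨x, hxy, Sym2.eq_swap⟩
    have hu0 : u.1 ≠ 0 := by
      intro hu0
      refine hnotB i4 h41 h42 h43 _ heE ht4 ?_
      rw [hBdef, Finset.mem_filter]
      exact ⟨heE, u, by simp, hu0⟩
    obtain ⟨j, rfl⟩ := fst_ne_zero_cases u hu0
    have hj4 : j ≠ i4 := fun h => hu (by rw [h])
    have hjx : ∀ i, P i → j ≠ i := by
      intro i hPi hji
      subst hji
      obtain ⟨w, hw0, heq⟩ := hNt j hPi _ heE (by simp)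
      have : t4 = sing5 j ∨ t4 = w := by
        have := heq ▸ ht4
        exact Sym2.mem_iff.mp this
      rcases this with h | h
      · exact hj4 (sing5_inj h).symm
      · exact sing5_fst_ne i4 (show t4.1 = 0 by rw [h]; exact hw0)
    exact ⟨j, hjx i1 hP1, hjx i2 hP2, hjx i3 hP3, hj4, rfl⟩
  -- conclude
  obtain ⟨e, e', hee', hpair⟩ := Finset.card_eq_two.mp (hD t4)
  have he : e ∈ E.filter (fun e => t4 ∈ e) := by rw [hpair]; simp
  have he' : e' ∈ E.filter (fun e => t4 ∈ e) := by rw [hpair]; simp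
  obtain ⟨j, hj1, hj2, hj3, hj4, rfl⟩ := hkey e he
  obtain ⟨j', hj1', hj2', hj3', hj4', rfl⟩ := hkey e' he'
  have : j = j' := fin5_unique i1 i2 i3 i4 j j' h12 h13 (Ne.symm h41) h23 (Ne.symm h42)
    (Ne.symm h43) ⟨hj1, hj2, hj3, hj4⟩ ⟨hj1', hj2', hj3', hj4'⟩
  exact hee' (by rw [this])
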